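/- Let p be an odd prime and σ ∈ GL(n,p) with minimal polynomial f = ∏_{i=0}^{s-1} p_i^{k_i} equal to its characteristic polynomial (the p_i distinct monic irreducibles), and suppose p divides the order of σ. Let t_i be minimal with p^{t_i} ≥ k_i. Then the subgroup generated by σ^{o(σ)/p} fixes pointwise an (n-1)-dimensional subspace if and only if there exists an index i such that p_i is linear (p_i(x) = x - α_i), t_i > t_j for all j ≠ i, and k_i = p^{t_i - 1} + 1. -/

import Mathlib

open Polynomial

set_option linter.unusedSectionVars false

open Polynomial Module LinearMap

section Helpers

variable {F : Type*} [Field F] {V : Type*} [AddCommGroup V] [Module F V]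
  [FiniteDimensional F V]

private lemma aeval_comm (φ : Module.End F V) (a b : F[X]) :
    aeval φ a * aeval φ b = aeval φ b * aeval φ a := by
  rw [← map_mul, ← map_mul, mul_comm]

private lemma aeval_mem (φ : Module.End F V) {U : Submodule F V}
    (hU : ∀ v ∈ U, φ v ∈ U) (q : F[X]) : ∀ v ∈ U, aeval φ q v ∈ U := by
  induction q using Polynomial.induction_on' with
  | add a b ha hb =>
      intro v hv
      rw [map_add, LinearMap.add_apply]
      exact U.add_mem (ha v hv) (hb v hv)
  | monomial m a =>
      intro v hv
      have hpow : ∀ m : ℕ, (φ ^ m) v ∈ U := by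
        intro m
        induction m with
        | zero => simpa using hv
        | succ m ih => rw [pow_succ', Module.End.mul_apply]; exact hU _ ih
      rw [aeval_monomial, Module.End.mul_apply, Module.algebraMap_end_apply]
      exact U.smul_mem _ (hpow m)

private lemma aeval_restrict_apply (φ : Module.End F V) {U : Submodule F V}
    (hU : ∀ v ∈ U, φ v ∈ U) (q : F[X]) (u : U) :
    ((aeval (φ.restrict hU) q) u : V) = aeval φ q (u : V) := by
  induction q using Polynomial.induction_on' with
  | add a b ha hb => rw [map_add, map_add]; simp [ha, hb]
  | monomial m a =>
      have hpow : ∀ m : ℕ, (((φ.restrict hU) ^ m) u : V) = (φ ^ m) (u : V) := by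
        intro m
        induction m with
        | zero => simp
        | succ m ih =>
            rw [pow_succ', pow_succ', Module.End.mul_apply, Module.End.mul_apply,
              LinearMap.restrict_coe_apply, ih]
      rw [aeval_monomial, aeval_monomial, Module.End.mul_apply, Module.End.mul_apply,
        Module.algebraMap_end_apply, Module.algebraMap_end_apply, Submodule.coe_smul, hpow]

private lemma aeval_mapQ_apply (φ : Module.End F V) {U : Submodule F V}
    (hU : U ≤ U.comap φ) (q : F[X]) (v : V) :
    aeval (Submodule.mapQ U U φ hU) q (Submodule.Quotient.mk v)
      = Submodule.Quotient.mk (aeval φ q v) := by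
  induction q using Polynomial.induction_on' with
  | add a b ha hb => rw [map_add, map_add]; simp [ha, hb]
  | monomial m a =>
      have hpow : ∀ m : ℕ, ((Submodule.mapQ U U φ hU) ^ m) (Submodule.Quotient.mk v)
          = Submodule.Quotient.mk ((φ ^ m) v) := by
        intro m
        induction m with
        | zero => simp
        | succ m ih =>
            rw [pow_succ', pow_succ', Module.End.mul_apply, Module.End.mul_apply, ih,
              Submodule.mapQ_apply]
      rw [aeval_monomial, aeval_monomial, Module.End.mul_apply, Module.End.mul_apply, hpow,
        Module.algebraMap_end_apply, Module.algebraMap_end_apply,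
        ← Submodule.Quotient.mk_smul]

end Helpers

section CLemma

variable {F : Type*} [Field F] {V : Type*} [AddCommGroup V] [Module F V]
  [FiniteDimensional F V]

lemma finrank_ker_aeval_le (φ : Module.End F V)
    (hmc : minpoly F φ = LinearMap.charpoly φ) (q : F[X]) (hq : q ≠ 0) :
    Module.finrank F (LinearMap.ker (aeval φ q)) ≤ q.natDegree := by
  set U := LinearMap.ker (aeval φ q) with hUdef
  have hU : ∀ v ∈ U, φ v ∈ U := by
    intro v hv
    rw [hUdef, LinearMap.mem_ker] at hv ⊢
    have hcm : aeval φ q * φ = φ * aeval φ q := by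
      have := aeval_comm φ q X
      simpa [Polynomial.aeval_X] using this
    have : aeval φ q (φ v) = φ (aeval φ q v) := by
      rw [← Module.End.mul_apply, hcm, Module.End.mul_apply]
    rw [this, hv, map_zero]
  let φU := φ.restrict hU
  have hA : aeval φU q = 0 := by
    ext u
    have h1 : ((aeval φU q) u : V) = aeval φ q (u : V) := aeval_restrict_apply φ hU q u
    have h2 : aeval φ q (u : V) = 0 := u.2
    simpa [h1] using h2
  have hadvd : minpoly F φU ∣ q := minpoly.dvd _ _ hA
  have hU' : U ≤ U.comap φ := fun v hv => hU v hv
  set φQ := Submodule.mapQ U U φ hU' with hφQ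
  have hB : aeval φ ((minpoly F φU) * (LinearMap.charpoly φQ)) = 0 := by
    rw [map_mul]
    ext v
    rw [Module.End.mul_apply, LinearMap.zero_apply]
    have h1 : aeval φ (LinearMap.charpoly φQ) v ∈ U := by
      rw [← Submodule.Quotient.mk_eq_zero, ← aeval_mapQ_apply φ hU',
        LinearMap.aeval_self_charpoly, LinearMap.zero_apply]
    have h2 := aeval_restrict_apply φ hU (minpoly F φU) ⟨_, h1⟩
    rw [minpoly.aeval] at h2
    simpa using h2.symm
  have hdvd2 : minpoly F φ ∣ minpoly F φU * LinearMap.charpoly φQ := minpoly.dvd _ _ hB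
  have hmon1 : (minpoly F φU).Monic := minpoly.monic (LinearMap.isIntegral φU)
  have hmon2 : (LinearMap.charpoly φQ).Monic := LinearMap.charpoly_monic φQ
  have hne : minpoly F φU * LinearMap.charpoly φQ ≠ 0 := (hmon1.mul hmon2).ne_zero
  have hdeg := Polynomial.natDegree_le_of_dvd hdvd2 hne
  rw [Polynomial.natDegree_mul hmon1.ne_zero hmon2.ne_zero] at hdeg
  have h3 : (minpoly F φU).natDegree ≤ q.natDegree := Polynomial.natDegree_le_of_dvd hadvd hq
  have h4 : (LinearMap.charpoly φQ).natDegree = Module.finrank F (V ⧸ U) :=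
    LinearMap.charpoly_natDegree φQ
  have h5 : Module.finrank F (V ⧸ U) + Module.finrank F U = Module.finrank F V :=
    Submodule.finrank_quotient_add_finrank U
  have h6 : (minpoly F φ).natDegree = Module.finrank F V := by
    rw [hmc]; exact LinearMap.charpoly_natDegree φ
  omega

lemma finrank_ker_aeval_of_dvd (φ : Module.End F V)
    (hmc : minpoly F φ = LinearMap.charpoly φ) (h : F[X])
    (hdvd : h ∣ minpoly F φ) :
    Module.finrank F (LinearMap.ker (aeval φ h)) = h.natDegree := by
  obtain ⟨c, hc⟩ := hdvd
  have hf0 : minpoly F φ ≠ 0 := by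
    rw [hmc]; exact (LinearMap.charpoly_monic φ).ne_zero
  have hh0 : h ≠ 0 := fun h0 => hf0 (by rw [hc, h0, zero_mul])
  have hc0 : c ≠ 0 := fun h0 => hf0 (by rw [hc, h0, mul_zero])
  have hup := finrank_ker_aeval_le φ hmc h hh0
  have hcomp : (aeval φ h) * (aeval φ c) = 0 := by
    rw [← map_mul, ← hc, minpoly.aeval]
  have hrange : LinearMap.range (aeval φ c) ≤ LinearMap.ker (aeval φ h) := by
    rintro v ⟨w, rfl⟩
    rw [LinearMap.mem_ker, ← Module.End.mul_apply, hcomp, LinearMap.zero_apply]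
  have h1 : Module.finrank F (LinearMap.range (aeval φ c))
      ≤ Module.finrank F (LinearMap.ker (aeval φ h)) := Submodule.finrank_mono hrange
  have h2 : Module.finrank F (LinearMap.range (aeval φ c))
      + Module.finrank F (LinearMap.ker (aeval φ c)) = Module.finrank F V :=
    LinearMap.finrank_range_add_finrank_ker _
  have h3 := finrank_ker_aeval_le φ hmc c hc0
  have hdegs : h.natDegree + c.natDegree = Module.finrank F V := by
    rw [← Polynomial.natDegree_mul hh0 hc0, ← hc, hmc]
    exact LinearMap.charpoly_natDegree φ
  omega

end CLemma

section NumHelpers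

private lemma le_of_pow_dvd_pow_mul {α : Type*} [CommMonoidWithZero α] [IsCancelMulZero α]
    {P u : α} (hP : Prime P) (hu : ¬ P ∣ u) {k M : ℕ} (h : P ^ k ∣ P ^ M * u) :
    k ≤ M := by
  by_contra hlt
  push_neg at hlt
  have h1 : P ^ (M + 1) ∣ P ^ M * u := (pow_dvd_pow P hlt).trans h
  rw [pow_succ] at h1
  have h2 : P ∣ u := by
    rcases h1 with ⟨c, hc⟩
    have hce : P ^ M * u = P ^ M * (P * c) := by rw [hc, mul_assoc]
    exact ⟨c, mul_left_cancel₀ (pow_ne_zero M hP.ne_zero) hce⟩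
  exact hu h2

private lemma dvd_prod_transfer {α ι : Type*} [CommMonoidWithZero α] [GCDMonoid α]
    (a : α) (s : Finset ι) (f g : ι → α)
    (h : ∀ i ∈ s, ∀ d : α, d ∣ f i → d ∣ a → d ∣ g i) :
    ∀ d, d ∣ ∏ i ∈ s, f i → d ∣ a → d ∣ ∏ i ∈ s, g i := by
  induction s using Finset.cons_induction with
  | empty => exact fun d hd _ => by simpa using hd
  | cons i s his ih =>
      intro d hd hda
      rw [Finset.prod_cons] at hd ⊢
      obtain ⟨d₁, d₂, hd₁, hd₂, rfl⟩ := exists_dvd_and_dvd_of_dvd_mul hd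
      exact mul_dvd_mul
        (h i (Finset.mem_cons_self i s) d₁ hd₁ ((dvd_mul_right d₁ d₂).trans hda))
        (ih (fun j hj => h j (Finset.mem_cons_of_mem hj)) d₂ hd₂
          ((dvd_mul_left d₂ d₁).trans hda))

variable {p : ℕ} [Fact p.Prime]

private lemma order_of_irreducible (P : (ZMod p)[X]) (hirr : Irreducible P)
    (N₀ : ℕ) (hN₀ : 0 < N₀) (hdvd : P ∣ X ^ N₀ - 1) :
    ∃ r : ℕ, 0 < r ∧ ¬ p ∣ r ∧ ∀ N : ℕ, (P ∣ X ^ N - 1 ↔ r ∣ N) := by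
  haveI : Fact (Irreducible P) := ⟨hirr⟩
  haveI : CharP (AdjoinRoot P) p :=
    charP_of_injective_algebraMap (algebraMap (ZMod p) (AdjoinRoot P)).injective p
  have key : ∀ N : ℕ, P ∣ X ^ N - 1 ↔ (AdjoinRoot.root P) ^ N = 1 := by
    intro N
    rw [← AdjoinRoot.mk_eq_zero (f := P), map_sub, map_pow, AdjoinRoot.mk_X, map_one,
      sub_eq_zero]
  have hfin : IsOfFinOrder (AdjoinRoot.root P) :=
    isOfFinOrder_iff_pow_eq_one.2 ⟨N₀, hN₀, (key N₀).1 hdvd⟩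
  refine ⟨orderOf (AdjoinRoot.root P), hfin.orderOf_pos, ?_, fun N =>
    (key N).trans (orderOf_dvd_iff_pow_eq_one).symm⟩
  rintro ⟨r', hr'⟩
  have hr'pos : 0 < r' := by
    rcases Nat.eq_zero_or_pos r' with h0 | h
    · exfalso; rw [h0, mul_zero] at hr'; exact hfin.orderOf_pos.ne' hr'
    · exact h
  have hsub : ((AdjoinRoot.root P) ^ r' - 1) ^ p = 0 := by
    rw [sub_pow_char, one_pow, ← pow_mul, mul_comm r' p, ← hr', pow_orderOf_eq_one]
    exact sub_self 1
  have h1 : (AdjoinRoot.root P) ^ r' = 1 := by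
    have := pow_eq_zero_iff (n := p) (Fact.out (p := p.Prime)).ne_zero |>.1 hsub
    rwa [sub_eq_zero] at this
  have h2 : orderOf (AdjoinRoot.root P) ∣ r' := orderOf_dvd_iff_pow_eq_one.2 h1
  have h3 := Nat.le_of_dvd hr'pos h2
  have h4 : r' < orderOf (AdjoinRoot.root P) := by
    rw [hr']
    calc r' < 2 * r' := by omega
    _ ≤ p * r' := Nat.mul_le_mul_right r' (Fact.out (p := p.Prime)).two_le
  omega

private lemma key_valuation (P : (ZMod p)[X]) (hirr : Irreducible P)
    (r : ℕ) (hord : ∀ N : ℕ, P ∣ X ^ N - 1 ↔ r ∣ N)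
    (N' e : ℕ) (hpN' : ¬ p ∣ N') :
    (∀ k, P ^ k ∣ X ^ (N' * p ^ e) - 1 → k ≤ p ^ e) ∧
    (r ∣ N' → ∀ k, k ≤ p ^ e → P ^ k ∣ X ^ (N' * p ^ e) - 1) := by
  have hXN : (X : (ZMod p)[X]) ^ (N' * p ^ e) - 1 = (X ^ N' - 1) ^ (p ^ e) := by
    rw [sub_pow_char_pow, ← pow_mul, one_pow]
  have hprime : Prime P := hirr.prime
  constructor
  · intro k hk
    rcases Nat.eq_zero_or_pos k with rfl | hk0
    · exact Nat.zero_le _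
    have hPdvd : P ∣ X ^ N' - 1 := by
      have h1 : P ∣ (X ^ N' - 1) ^ (p ^ e) := by
        rw [← hXN]; exact (dvd_pow_self P hk0.ne').trans hk
      exact hprime.dvd_of_dvd_pow h1
    obtain ⟨c, hc⟩ := hPdvd
    have hsq : Squarefree ((X : (ZMod p)[X]) ^ N' - 1) := by
      have hn : ((N' : ℕ) : ZMod p) ≠ 0 := by
        rwa [Ne, ZMod.natCast_eq_zero_iff]
      have := Polynomial.separable_X_pow_sub_C (F := ZMod p) (n := N') 1 hn one_ne_zero
      rw [map_one] at this
      exact this.squarefree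
    have hPc : ¬ P ∣ c := by
      intro hdc
      have : P * P ∣ X ^ N' - 1 := by
        rw [hc]; exact mul_dvd_mul_left P hdc
      exact hirr.not_isUnit (hsq P this)
    have hk2 : P ^ k ∣ P ^ (p ^ e) * c ^ (p ^ e) := by
      rw [← mul_pow, ← hc, ← hXN]; exact hk
    exact le_of_pow_dvd_pow_mul hprime
      (fun h => hPc (hprime.dvd_of_dvd_pow h)) hk2
  · intro hrN' k hk
    have hPdvd : P ∣ X ^ N' - 1 := (hord N').2 hrN'
    calc P ^ k ∣ P ^ (p ^ e) := pow_dvd_pow P hk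
    _ ∣ (X ^ N' - 1) ^ (p ^ e) := pow_dvd_pow_of_dvd hPdvd _
    _ = X ^ (N' * p ^ e) - 1 := hXN.symm

end NumHelpers

/-- Let `p` be an odd prime, `σ ∈ GL(n,p)` with minimal polynomial
`f = ∏ i, (P i)^(k i)` (the `P i` distinct monic irreducibles) equal to its
characteristic polynomial, and suppose `p` divides the order of `σ`.  Let `t i` be
minimal with `p^(t i) ≥ k i`.  Then `⟨σ^(o(σ)/p)⟩` fixes pointwise an
`(n-1)`-dimensional subspace iff there is an index `i` with `P i` linear,
`t i > t j` for all `j ≠ i`, and `k i = p^(t i - 1) + 1`. -/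
theorem stmt_6 (p n : ℕ) (hp : p.Prime) (hodd : p ≠ 2) [Fact p.Prime]
    (σ : (Fin n → ZMod p) ≃ₗ[ZMod p] (Fin n → ZMod p))
    (f : Polynomial (ZMod p))
    (hf : f = minpoly (ZMod p) σ.toLinearMap)
    (hchar : f = LinearMap.charpoly σ.toLinearMap)
    (s : ℕ) (P : Fin s → Polynomial (ZMod p)) (k : Fin s → ℕ)
    (hP : ∀ i, (P i).Monic ∧ Irreducible (P i)) (hk : ∀ i, 0 < k i)
    (hdist : Function.Injective P)
    (hfact : f = ∏ i, P i ^ k i)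
    (t : Fin s → ℕ) (ht : ∀ i, IsLeast {m : ℕ | k i ≤ p ^ m} (t i))
    (hpe : p ∣ orderOf σ) :
    (∃ W : Submodule (ZMod p) (Fin n → ZMod p),
        Module.finrank (ZMod p) W = n - 1 ∧
        ∀ w ∈ W, (σ ^ (orderOf σ / p)) w = w) ↔
      ∃ i : Fin s, (∃ α : ZMod p, P i = X - C α) ∧
        (∀ j : Fin s, j ≠ i → t j < t i) ∧ k i = p ^ (t i - 1) + 1 := by
  classical
  set φ := σ.toLinearMap with hφdef
  have hmc : minpoly (ZMod p) φ = LinearMap.charpoly φ := by rw [← hf, hchar]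
  have hfmonic : f.Monic := hchar ▸ LinearMap.charpoly_monic φ
  have hfdeg : f.natDegree = n := by
    rw [hchar, LinearMap.charpoly_natDegree]
    simp [Module.finrank_pi]
  have haf : aeval φ f = 0 := by rw [hf]; exact minpoly.aeval _ _
  -- n is positive
  have hn : 0 < n := by
    rcases Nat.eq_zero_or_pos n with h0 | h
    · exfalso
      subst h0
      haveI : Unique (Fin 0 → ZMod p) := Pi.uniqueOfIsEmpty _
      have hσ1 : σ = 1 := by
        apply LinearEquiv.toLinearMap_injective
        apply LinearMap.ext
        intro v
        exact Subsingleton.elim _ _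
      rw [hσ1, orderOf_one] at hpe
      exact absurd (Nat.le_of_dvd one_pos hpe) (by have := hp.one_lt; omega)
    · exact h
  -- finiteness / order
  haveI : Finite ((Fin n → ZMod p) ≃ₗ[ZMod p] (Fin n → ZMod p)) := by
    apply Finite.of_injective
      (fun e : (Fin n → ZMod p) ≃ₗ[ZMod p] (Fin n → ZMod p) =>
        ((e : (Fin n → ZMod p) → (Fin n → ZMod p))))
    intro a b hab
    apply LinearEquiv.toLinearMap_injective
    apply LinearMap.ext
    intro v
    exact congrFun hab v
  have ho : 0 < orderOf σ := orderOf_pos σ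
  -- powers of σ vs powers of φ
  have hpowpt : ∀ (N : ℕ) (v : Fin n → ZMod p), (σ ^ N) v = (φ ^ N) v := by
    intro N
    induction N with
    | zero => intro v; rfl
    | succ N ih =>
        intro v
        rw [pow_succ', pow_succ', Module.End.mul_apply, ← ih]
        rfl
  have hpowiff : ∀ N : ℕ, σ ^ N = 1 ↔ f ∣ X ^ N - 1 := by
    intro N
    have hdd : minpoly (ZMod p) φ ∣ X ^ N - 1 ↔
        aeval φ ((X : (ZMod p)[X]) ^ N - 1) = 0 :=
      minpoly.dvd_iff
    rw [hf, hdd]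
    have : aeval φ ((X : (ZMod p)[X]) ^ N - 1) = φ ^ N - 1 := by
      rw [map_sub, aeval_X_pow, map_one]
    rw [this, sub_eq_zero]
    constructor
    · intro h1
      apply LinearMap.ext
      intro v
      rw [← hpowpt N v, h1]
      rfl
    · intro h1
      apply LinearEquiv.toLinearMap_injective
      apply LinearMap.ext
      intro v
      have := hpowpt N v
      rw [h1] at this
      simpa using this
  have hfo : f ∣ X ^ orderOf σ - 1 := (hpowiff _).1 (pow_orderOf_eq_one σ)
  -- s is positive
  have hs : 0 < s := by
    rcases Nat.eq_zero_or_pos s with h0 | h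
    · exfalso
      subst h0
      rw [Finset.univ_eq_empty, Finset.prod_empty] at hfact
      rw [hfact, Polynomial.natDegree_one] at hfdeg
      omega
    · exact h
  have hprime : ∀ i, Prime (P i) := fun i => (hP i).2.prime
  have hPdeg : ∀ i, 0 < (P i).natDegree := by
    intro i
    rcases Nat.eq_zero_or_pos (P i).natDegree with h0 | h
    · exact absurd ((hP i).1.natDegree_eq_zero.1 h0 ▸ isUnit_one)
        (hP i).2.not_isUnit
    · exact h
  have hnd : ∀ i j, i ≠ j → ¬ P i ∣ P j := by
    intro i j hij hdvd
    exact hij (hdist (Polynomial.eq_of_monic_of_associated (hP i).1 (hP j).1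
      ((hP i).2.associated_of_dvd (hP j).2 hdvd)))
  have hcop : ∀ i j, i ≠ j → IsCoprime (P i) (P j) := by
    intro i j hij
    apply isCoprime_of_irreducible_dvd
    · rintro ⟨h1, -⟩
      exact (hP i).1.ne_zero h1
    · intro z hz hzi hzj
      have hassoc := hz.associated_of_dvd (hP i).2 hzi
      exact hnd i j hij (hassoc.symm.dvd.trans hzj)
  -- order structure
  have hPko : ∀ i, P i ^ k i ∣ X ^ orderOf σ - 1 := by
    intro i
    exact (Finset.dvd_prod_of_mem (fun j => P j ^ k j) (Finset.mem_univ i)).trans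
      (hfact ▸ hfo)
  have hPo : ∀ i, P i ∣ X ^ orderOf σ - 1 := fun i =>
    (dvd_pow_self (P i) (hk i).ne').trans (hPko i)
  have hr := fun i => order_of_irreducible (P i) (hP i).2 (orderOf σ) ho (hPo i)
  choose r hr1 hr2 hr3 using hr
  set E := (orderOf σ).factorization p with hEdef
  set oc := ordCompl[p] (orderOf σ) with hocdef
  have hoeq : p ^ E * oc = orderOf σ := Nat.ordProj_mul_ordCompl_eq_self _ p
  have hpoc : ¬ p ∣ oc := Nat.not_dvd_ordCompl hp ho.ne'
  have hocpos : 0 < oc := Nat.ordCompl_pos p ho.ne'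
  have hosplit : orderOf σ = oc * p ^ E := by rw [← hoeq]; ring
  have hkE : ∀ i, k i ≤ p ^ E := by
    intro i
    exact (key_valuation (P i) (hP i).2 (r i) (hr3 i) oc E hpoc).1 (k i)
      (hosplit ▸ hPko i)
  have hro : ∀ i, r i ∣ orderOf σ := fun i => (hr3 i _).1 (hPo i)
  have hroc : ∀ i, r i ∣ oc := by
    intro i
    have hcopr : Nat.Coprime (r i) (p ^ E) :=
      ((hp.coprime_iff_not_dvd.2 (hr2 i)).pow_left E).symm
    exact hcopr.dvd_of_dvd_mul_right (by rw [← hosplit]; exact hro i)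
  set T := Finset.univ.sup t with hTdef
  have htleT : ∀ i, t i ≤ T := fun i => Finset.le_sup (Finset.mem_univ i)
  have htE : ∀ i, t i ≤ E := fun i => (ht i).2 (hkE i)
  have hTE : T ≤ E := Finset.sup_le fun i _ => htE i
  -- σ^(oc * p^T) = 1 hence orderOf divides it, hence E ≤ T
  have hfN₁ : f ∣ X ^ (oc * p ^ T) - 1 := by
    rw [hfact]
    apply Finset.prod_dvd_of_coprime
    · intro i _ j _ hij
      exact ((hcop i j hij).pow)
    · intro i _
      exact (key_valuation (P i) (hP i).2 (r i) (hr3 i) oc T hpoc).2 (hroc i) (k i)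
        ((ht i).1.trans (Nat.pow_le_pow_right hp.pos (htleT i)))
  have hET : E = T := by
    have hdvdN₁ : orderOf σ ∣ oc * p ^ T :=
      orderOf_dvd_of_pow_eq_one ((hpowiff _).2 hfN₁)
    have h0 : p ^ E ∣ orderOf σ := ⟨oc, hoeq.symm ▸ rfl⟩
    have h1 : p ^ E ∣ oc * p ^ T := h0.trans hdvdN₁
    have hcopr : Nat.Coprime (p ^ E) oc := (hp.coprime_iff_not_dvd.2 hpoc).pow_left E
    have h2 : p ^ E ∣ p ^ T := hcopr.dvd_of_dvd_mul_left h1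
    have h3 : E ≤ T := (Nat.pow_dvd_pow_iff_le_right hp.one_lt).1 h2
    omega
  have hT1 : 1 ≤ T := by
    by_contra hT0
    push_neg at hT0
    have hT0' : T = 0 := by omega
    have : orderOf σ = oc := by rw [hosplit, hET, hT0', pow_zero, mul_one]
    rw [this] at hpe
    exact hpoc hpe
  -- m := orderOf σ / p
  set m := oc * p ^ (T - 1) with hmdef
  have hmp : m * p = orderOf σ := by
    rw [hmdef, hosplit, hET, mul_assoc, ← pow_succ]
    congr 2
    omega
  have hm : orderOf σ / p = m := by
    rw [← hmp, Nat.mul_div_cancel _ hp.pos]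
  -- the polynomial g
  set g := ∏ i, P i ^ min (k i) (p ^ (T - 1)) with hgdef
  have hgf : g ∣ f := by
    rw [hfact, hgdef]
    exact Finset.prod_dvd_prod_of_dvd _ _ fun i _ =>
      pow_dvd_pow (P i) (min_le_left _ _)
  have hgm : g ∣ X ^ m - 1 := by
    rw [hgdef]
    apply Finset.prod_dvd_of_coprime
    · intro i _ j _ hij
      exact ((hcop i j hij).pow)
    · intro i _
      exact (key_valuation (P i) (hP i).2 (r i) (hr3 i) oc (T - 1) hpoc).2 (hroc i) _
        (min_le_right _ _)
  -- kernels
  have hker_mono : ∀ a b : (ZMod p)[X], a ∣ b →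
      LinearMap.ker (aeval φ a) ≤ LinearMap.ker (aeval φ b) := by
    rintro a b ⟨c, rfl⟩ v hv
    rw [LinearMap.mem_ker] at hv ⊢
    rw [mul_comm, map_mul, Module.End.mul_apply, hv, map_zero]
  set K := LinearMap.ker (aeval φ ((X : (ZMod p)[X]) ^ m - 1)) with hKdef
  have hKg : K = LinearMap.ker (aeval φ g) := by
    apply le_antisymm
    · -- via gcd and bezout
      set d := EuclideanDomain.gcd ((X : (ZMod p)[X]) ^ m - 1) f with hddef
      have hd1 : d ∣ (X : (ZMod p)[X]) ^ m - 1 := EuclideanDomain.gcd_dvd_left _ _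
      have hd2 : d ∣ f := EuclideanDomain.gcd_dvd_right _ _
      have hdg : d ∣ g := by
        apply dvd_prod_transfer ((X : (ZMod p)[X]) ^ m - 1) Finset.univ
          (fun i => P i ^ k i) (fun i => P i ^ min (k i) (p ^ (T - 1)))
          ?_ d (hfact ▸ hd2) hd1
        intro i _ d' hd'P hd'X
        obtain ⟨c, hck, hassoc⟩ := (dvd_prime_pow (hprime i) _).1 hd'P
        have hPc : P i ^ c ∣ (X : (ZMod p)[X]) ^ m - 1 :=
          (hassoc.symm.dvd).trans hd'X
        have hcle : c ≤ p ^ (T - 1) :=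
          (key_valuation (P i) (hP i).2 (r i) (hr3 i) oc (T - 1) hpoc).1 c hPc
        exact hassoc.dvd.trans (pow_dvd_pow (P i) (le_min hck hcle))
      have hKd : K ≤ LinearMap.ker (aeval φ d) := by
        intro v hv
        rw [hKdef, LinearMap.mem_ker] at hv
        rw [LinearMap.mem_ker]
        have hbez := EuclideanDomain.gcd_eq_gcd_ab ((X : (ZMod p)[X]) ^ m - 1) f
        rw [← hddef] at hbez
        rw [hbez, map_add, LinearMap.add_apply]
        have e1 : aeval φ (((X : (ZMod p)[X]) ^ m - 1) *
            EuclideanDomain.gcdA ((X : (ZMod p)[X]) ^ m - 1) f) v = 0 := by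
          rw [mul_comm, map_mul, Module.End.mul_apply, hv, map_zero]
        have e2 : aeval φ (f * EuclideanDomain.gcdB ((X : (ZMod p)[X]) ^ m - 1) f) v
            = 0 := by
          rw [mul_comm, map_mul, Module.End.mul_apply, haf, LinearMap.zero_apply,
            map_zero]
        rw [e1, e2, add_zero]
      exact hKd.trans (hker_mono d g hdg)
    · exact hker_mono g _ hgm
  have hfinK : Module.finrank (ZMod p) K = g.natDegree := by
    rw [hKg]
    exact finrank_ker_aeval_of_dvd φ hmc g (hf ▸ hgf)
  have hfixiff : ∀ w : Fin n → ZMod p, w ∈ K ↔ (σ ^ (orderOf σ / p)) w = w := by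
    intro w
    rw [hm, hKdef, LinearMap.mem_ker, map_sub, aeval_X_pow, map_one,
      LinearMap.sub_apply, Module.End.one_apply, sub_eq_zero]
    rw [hpowpt m w]
  -- degree computations
  have hdg : g.natDegree = ∑ i, min (k i) (p ^ (T - 1)) * (P i).natDegree := by
    rw [hgdef, Polynomial.natDegree_prod _ _ fun i _ => pow_ne_zero _ (hP i).1.ne_zero]
    exact Finset.sum_congr rfl fun i _ => by rw [Polynomial.natDegree_pow]
  have hnsum : n = ∑ i, k i * (P i).natDegree := by
    conv_lhs => rw [← hfdeg]
    rw [hfact, Polynomial.natDegree_prod _ _ fun i _ => pow_ne_zero _ (hP i).1.ne_zero]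
    exact Finset.sum_congr rfl fun i _ => by rw [Polynomial.natDegree_pow]
  haveI : Nonempty (Fin s) := ⟨⟨0, hs⟩⟩
  obtain ⟨i₀, -, hTi₀⟩ := Finset.exists_mem_eq_sup Finset.univ
    Finset.univ_nonempty t
  rw [← hTdef] at hTi₀
  have hkgt : ∀ i, t i = T → p ^ (T - 1) < k i := by
    intro i hiT
    by_contra hle
    push_neg at hle
    have := (ht i).2 hle
    omega
  have hklt : ∀ i, t i < T → k i ≤ p ^ (T - 1) := by
    intro i hiT
    exact (ht i).1.trans (Nat.pow_le_pow_right hp.pos (by omega))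
  have hglt : g.natDegree < n := by
    rw [hdg, hnsum]
    apply Finset.sum_lt_sum
    · intro i _
      exact Nat.mul_le_mul_right _ (min_le_left _ _)
    · refine ⟨i₀, Finset.mem_univ _, ?_⟩
      have h1 := hkgt i₀ hTi₀.symm
      have h2 : min (k i₀) (p ^ (T - 1)) < k i₀ := by omega
      exact (Nat.mul_lt_mul_right (hPdeg i₀)).2 h2
  have hmain : (∃ W : Submodule (ZMod p) (Fin n → ZMod p),
        Module.finrank (ZMod p) W = n - 1 ∧
        ∀ w ∈ W, (σ ^ (orderOf σ / p)) w = w) ↔ g.natDegree = n - 1 := by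
    constructor
    · rintro ⟨W, hW1, hW2⟩
      have hWK : W ≤ K := fun w hw => (hfixiff w).2 (hW2 w hw)
      have hmono := Submodule.finrank_mono hWK
      rw [hW1, hfinK] at hmono
      omega
    · intro hdeg1
      exact ⟨K, by rw [hfinK, hdeg1], fun w hw => (hfixiff w).1 hw⟩
  rw [hmain]
  -- pure arithmetic from here
  have hsplit : n = g.natDegree
      + ∑ i, (k i - min (k i) (p ^ (T - 1))) * (P i).natDegree := by
    rw [hnsum, hdg, ← Finset.sum_add_distrib]
    apply Finset.sum_congr rfl
    intro i _
    rw [← add_mul]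
    congr 1
    omega
  set D := ∑ i, (k i - min (k i) (p ^ (T - 1))) * (P i).natDegree with hDdef
  have hiff1 : g.natDegree = n - 1 ↔ D = 1 := by omega
  rw [hiff1]
  constructor
  · intro hD1
    have hsum : (k i₀ - min (k i₀) (p ^ (T - 1))) * (P i₀).natDegree
        + ∑ j ∈ Finset.univ.erase i₀,
            (k j - min (k j) (p ^ (T - 1))) * (P j).natDegree = D := by
      rw [hDdef]
      exact Finset.add_sum_erase _
        (fun j => (k j - min (k j) (p ^ (T - 1))) * (P j).natDegree)
        (Finset.mem_univ i₀)
    have hk0gt := hkgt i₀ hTi₀.symm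
    have hi₀ge : 1 ≤ (k i₀ - min (k i₀) (p ^ (T - 1))) * (P i₀).natDegree :=
      Nat.mul_pos (by omega) (hPdeg i₀)
    have hrest : ∑ j ∈ Finset.univ.erase i₀,
        (k j - min (k j) (p ^ (T - 1))) * (P j).natDegree = 0 := by omega
    have hterm : (k i₀ - min (k i₀) (p ^ (T - 1))) * (P i₀).natDegree = 1 := by omega
    have hkmin : k i₀ - min (k i₀) (p ^ (T - 1)) = 1 :=
      Nat.eq_one_of_mul_eq_one_right hterm
    have hdeg1' : (P i₀).natDegree = 1 := Nat.eq_one_of_mul_eq_one_left hterm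
    have hzero : ∀ j, j ≠ i₀ →
        (k j - min (k j) (p ^ (T - 1))) * (P j).natDegree = 0 := by
      intro j hj
      exact (Finset.sum_eq_zero_iff.1 hrest) j (Finset.mem_erase.2 ⟨hj, Finset.mem_univ j⟩)
    refine ⟨i₀, ⟨-((P i₀).coeff 0), ?_⟩, ?_, ?_⟩
    · rw [map_neg, sub_neg_eq_add]
      exact (hP i₀).1.eq_X_add_C hdeg1'
    · intro j hj
      have h0 := hzero j hj
      have hdj := hPdeg j
      have hkj : k j ≤ p ^ (T - 1) := by
        rcases Nat.mul_eq_zero.1 h0 with h | h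
        · omega
        · omega
      have := (ht j).2 hkj
      omega
    · rw [← hTi₀]
      omega
  · rintro ⟨i₁, ⟨α, hlin⟩, hstrict, hk1⟩
    have hti₁ : t i₁ = T := by
      rcases eq_or_ne i₀ i₁ with rfl | hne
      · exact hTi₀.symm
      · have h1 := hstrict i₀ hne
        have h2 := htleT i₁
        omega
    have hd1 : (P i₁).natDegree = 1 := by
      rw [hlin]
      exact Polynomial.natDegree_X_sub_C α
    have hk1' : k i₁ = p ^ (T - 1) + 1 := by rw [← hti₁]; exact hk1
    rw [hDdef]
    rw [Finset.sum_eq_single i₁]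
    · rw [hd1, mul_one]
      omega
    · intro j _ hj
      have hjlt : t j < T := by
        have := hstrict j hj
        omega
      have hkj := hklt j hjlt
      have : k j - min (k j) (p ^ (T - 1)) = 0 := by omega
      rw [this, zero_mul]
    · intro h
      exact absurd (Finset.mem_univ i₁) h
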